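/- Let J_z = diag(1, 0, −1) and J_x = (1/√2)·[[0,1,0],[1,0,1],[0,1,0]] be the standard spin-1 angular momentum matrices along the z and x axes. Then for every 3×3 density matrix ρ, with V(X) = Tr[ρX²] − (Tr[ρX])², one has [2 − V(J_x) − 3V(J_x²)] · [2 − V(J_z) − 3V(J_z²)] ≤ 25/8 − 1/√2. -/

import Mathlib

set_option maxRecDepth 100000

set_option maxHeartbeats 2000000 in
lemma keypos' (w s : ℝ) (hw : 0 ≤ w) (hs : 0 ≤ s) (h1 : w + s ≤ 1) :
    (2-4*w-4*s+4*w^2+8*w*s+3*s^2) * (1-w+(3/4)*w^2+2*(1-w-s)*(w+2*s)) ≤ 12/5 := by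
  have hu : (0:ℝ) ≤ 1-w-s := by linarith
  have m0 : (0:ℝ) ≤ (1-w-s)^10 := by positivity
  have m1 : (0:ℝ) ≤ s^2*(1-w-s)^8 := by positivity
  have m2 : (0:ℝ) ≤ s^3*(1-w-s)^7 := by positivity
  have m3 : (0:ℝ) ≤ s^4*(1-w-s)^6 := by positivity
  have m4 : (0:ℝ) ≤ s^5*(1-w-s)^5 := by positivity
  have m5 : (0:ℝ) ≤ s^6*(1-w-s)^4 := by positivity
  have m6 : (0:ℝ) ≤ s^7*(1-w-s)^3 := by positivity
  have m7 : (0:ℝ) ≤ s^8*(1-w-s)^2 := by positivity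
  have m8 : (0:ℝ) ≤ s^9*(1-w-s)^1 := by positivity
  have m9 : (0:ℝ) ≤ s^10 := by positivity
  have m10 : (0:ℝ) ≤ w^1*(1-w-s)^9 := by positivity
  have m11 : (0:ℝ) ≤ w^1*s^1*(1-w-s)^8 := by positivity
  have m12 : (0:ℝ) ≤ w^1*s^2*(1-w-s)^7 := by positivity
  have m13 : (0:ℝ) ≤ w^1*s^3*(1-w-s)^6 := by positivity
  have m14 : (0:ℝ) ≤ w^1*s^4*(1-w-s)^5 := by positivity
  have m15 : (0:ℝ) ≤ w^1*s^5*(1-w-s)^4 := by positivity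
  have m16 : (0:ℝ) ≤ w^1*s^6*(1-w-s)^3 := by positivity
  have m17 : (0:ℝ) ≤ w^1*s^7*(1-w-s)^2 := by positivity
  have m18 : (0:ℝ) ≤ w^1*s^8*(1-w-s)^1 := by positivity
  have m19 : (0:ℝ) ≤ w^1*s^9 := by positivity
  have m20 : (0:ℝ) ≤ w^2*(1-w-s)^8 := by positivity
  have m21 : (0:ℝ) ≤ w^2*s^1*(1-w-s)^7 := by positivity
  have m22 : (0:ℝ) ≤ w^2*s^2*(1-w-s)^6 := by positivity
  have m23 : (0:ℝ) ≤ w^2*s^3*(1-w-s)^5 := by positivity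
  have m24 : (0:ℝ) ≤ w^2*s^4*(1-w-s)^4 := by positivity
  have m25 : (0:ℝ) ≤ w^2*s^5*(1-w-s)^3 := by positivity
  have m26 : (0:ℝ) ≤ w^2*s^6*(1-w-s)^2 := by positivity
  have m27 : (0:ℝ) ≤ w^2*s^7*(1-w-s)^1 := by positivity
  have m28 : (0:ℝ) ≤ w^2*s^8 := by positivity
  have m29 : (0:ℝ) ≤ w^3*(1-w-s)^7 := by positivity
  have m30 : (0:ℝ) ≤ w^3*s^1*(1-w-s)^6 := by positivity
  have m31 : (0:ℝ) ≤ w^3*s^2*(1-w-s)^5 := by positivity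
  have m32 : (0:ℝ) ≤ w^3*s^3*(1-w-s)^4 := by positivity
  have m33 : (0:ℝ) ≤ w^3*s^4*(1-w-s)^3 := by positivity
  have m34 : (0:ℝ) ≤ w^3*s^5*(1-w-s)^2 := by positivity
  have m35 : (0:ℝ) ≤ w^3*s^6*(1-w-s)^1 := by positivity
  have m36 : (0:ℝ) ≤ w^3*s^7 := by positivity
  have m37 : (0:ℝ) ≤ w^4*(1-w-s)^6 := by positivity
  have m38 : (0:ℝ) ≤ w^4*s^1*(1-w-s)^5 := by positivity
  have m39 : (0:ℝ) ≤ w^4*s^2*(1-w-s)^4 := by positivity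
  have m40 : (0:ℝ) ≤ w^4*s^3*(1-w-s)^3 := by positivity
  have m41 : (0:ℝ) ≤ w^4*s^4*(1-w-s)^2 := by positivity
  have m42 : (0:ℝ) ≤ w^4*s^5*(1-w-s)^1 := by positivity
  have m43 : (0:ℝ) ≤ w^4*s^6 := by positivity
  have m44 : (0:ℝ) ≤ w^5*(1-w-s)^5 := by positivity
  have m45 : (0:ℝ) ≤ w^5*s^1*(1-w-s)^4 := by positivity
  have m46 : (0:ℝ) ≤ w^5*s^2*(1-w-s)^3 := by positivity
  have m47 : (0:ℝ) ≤ w^5*s^3*(1-w-s)^2 := by positivity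
  have m48 : (0:ℝ) ≤ w^5*s^4*(1-w-s)^1 := by positivity
  have m49 : (0:ℝ) ≤ w^5*s^5 := by positivity
  have m50 : (0:ℝ) ≤ w^6*(1-w-s)^4 := by positivity
  have m51 : (0:ℝ) ≤ w^6*s^1*(1-w-s)^3 := by positivity
  have m52 : (0:ℝ) ≤ w^6*s^2*(1-w-s)^2 := by positivity
  have m53 : (0:ℝ) ≤ w^6*s^3*(1-w-s)^1 := by positivity
  have m54 : (0:ℝ) ≤ w^6*s^4 := by positivity
  have m55 : (0:ℝ) ≤ w^7*(1-w-s)^3 := by positivity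
  have m56 : (0:ℝ) ≤ w^7*s^1*(1-w-s)^2 := by positivity
  have m57 : (0:ℝ) ≤ w^7*s^2*(1-w-s)^1 := by positivity
  have m58 : (0:ℝ) ≤ w^7*s^3 := by positivity
  have m59 : (0:ℝ) ≤ w^8*(1-w-s)^2 := by positivity
  have m60 : (0:ℝ) ≤ w^8*s^1*(1-w-s)^1 := by positivity
  have m61 : (0:ℝ) ≤ w^8*s^2 := by positivity
  have m62 : (0:ℝ) ≤ w^9*(1-w-s)^1 := by positivity
  have m63 : (0:ℝ) ≤ w^9*s^1 := by positivity
  have m64 : (0:ℝ) ≤ w^10 := by positivity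
  linarith [m0, m1, m2, m3, m4, m5, m6, m7, m8, m9, m10, m11, m12, m13, m14, m15, m16, m17, m18, m19, m20, m21, m22, m23, m24, m25, m26, m27, m28, m29, m30, m31, m32, m33, m34, m35, m36, m37, m38, m39, m40, m41, m42, m43, m44, m45, m46, m47, m48, m49, m50, m51, m52, m53, m54, m55, m56, m57, m58, m59, m60, m61, m62, m63, m64]

lemma keyneg (b r : ℝ) (hb0 : 0 ≤ b) (hb1 : b ≤ 1) (hr : 4*r^2 ≤ b^2) (hrn : r ≤ 0) :
    (2-4*b+4*b^2-4*r^2) * (1 - b + 2*r + (3/4)*b^2 - 3*b*r + 3*r^2 + 2*(1-b)*(b+2*r)) ≤ 12/5 := by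
  nlinarith [sq_nonneg (b-1), sq_nonneg (b+2*r), mul_nonneg hb0 (sub_nonneg.2 hb1), sq_nonneg (2*r+1), sq_nonneg (b*r), mul_nonneg (neg_nonneg.2 hrn) (sub_nonneg.2 hb1), sq_nonneg (b-1+2*r), sq_nonneg (3*r+1), mul_nonneg (mul_nonneg (neg_nonneg.2 hrn) (sub_nonneg.2 hb1)) hb0]

lemma master (b a r x : ℝ) (hb0 : 0 ≤ b) (hb1 : b ≤ 1)
    (h1 : a^2 + 4*r^2 ≤ b^2) (h2 : x^2 ≤ (1-b)*(b+2*r)) :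
    (2 - 4*(1-b/2+r) + 3*(1-b/2+r)^2 + 2*x^2) * (2 - 4*b + 3*b^2 + a^2) ≤ 12/5 := by
  have hFz_nn : 0 ≤ 2 - 4*b + 3*b^2 + a^2 := by nlinarith [sq_nonneg (3*b-2), sq_nonneg a]
  have hFzle : 2 - 4*b + 3*b^2 + a^2 ≤ 2-4*b+4*b^2-4*r^2 := by nlinarith
  have hFx_nn : 0 ≤ 2 - 4*(1-b/2+r) + 3*(1-b/2+r)^2 + 2*x^2 := by
    nlinarith [sq_nonneg (3*(1-b/2+r)-2), sq_nonneg x]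
  have hFxle : 2 - 4*(1-b/2+r) + 3*(1-b/2+r)^2 + 2*x^2
      ≤ 1 - b + 2*r + (3/4)*b^2 - 3*b*r + 3*r^2 + 2*(1-b)*(b+2*r) := by nlinarith
  have key : (2-4*b+4*b^2-4*r^2) * (1 - b + 2*r + (3/4)*b^2 - 3*b*r + 3*r^2 + 2*(1-b)*(b+2*r)) ≤ 12/5 := by
    rcases le_total r 0 with hr | hr
    · exact keyneg b r hb0 hb1 (by nlinarith [sq_nonneg a]) hr
    · have hw : 0 ≤ b - 2*r := by nlinarith [sq_nonneg a, sq_nonneg (b+2*r)]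
      have := keypos' (b-2*r) (2*r) hw (by linarith) (by linarith)
      nlinarith [this]
  nlinarith [mul_le_mul hFxle hFzle hFz_nn (hFx_nn.trans hFxle), key]

open Matrix ComplexOrder

/-- The spin-1 angular momentum matrix along the `z` axis. -/
noncomputable def Jz : Matrix (Fin 3) (Fin 3) ℂ := !![1, 0, 0; 0, 0, 0; 0, 0, -1]

/-- The spin-1 angular momentum matrix along the `x` axis. -/
noncomputable def Jx : Matrix (Fin 3) (Fin 3) ℂ :=
  ((Real.sqrt 2 : ℂ))⁻¹ • !![0, 1, 0; 1, 0, 1; 0, 1, 0]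

set_option maxHeartbeats 2000000 in
/-- Eq. (29): the variance-based uncertainty relation for the spin-1 angular momentum
components `J_x` and `J_z`:
`[2 − V(J_x) − 3V(J_x²)][2 − V(J_z) − 3V(J_z²)] ≤ 25/8 − 1/√2`. -/
theorem spin1_Jx_Jz_variance_uncertainty
    (ρ : Matrix (Fin 3) (Fin 3) ℂ)
    (hρ : ρ.PosSemidef) (hρtr : ρ.trace = 1)
    (Vx Vx2 Vz Vz2 : ℝ)
    (hVx : (ρ * (Jx * Jx)).trace - ((ρ * Jx).trace) ^ 2 = (Vx : ℂ))
    (hVx2 : (ρ * ((Jx * Jx) * (Jx * Jx))).trace - ((ρ * (Jx * Jx)).trace) ^ 2 = (Vx2 : ℂ))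
    (hVz : (ρ * (Jz * Jz)).trace - ((ρ * Jz).trace) ^ 2 = (Vz : ℂ))
    (hVz2 : (ρ * ((Jz * Jz) * (Jz * Jz))).trace - ((ρ * (Jz * Jz)).trace) ^ 2 = (Vz2 : ℂ)) :
    (2 - Vx - 3 * Vx2) * (2 - Vz - 3 * Vz2) ≤ 25 / 8 - 1 / Real.sqrt 2 := by
  -- notation for real parts of entries
  set p1 := (ρ 0 0).re with hp1def
  set p2 := (ρ 1 1).re with hp2def
  set p3 := (ρ 2 2).re with hp3def
  set u := (ρ 0 1).re with hudef
  set v := (ρ 1 2).re with hvdef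
  set r := (ρ 0 2).re with hrdef
  have hH := hρ.1
  have h10 : (starRingEnd ℂ) (ρ 0 1) = ρ 1 0 := by
    have := congr_fun (congr_fun hH 1) 0; simpa [Matrix.conjTranspose_apply] using this
  have h21 : (starRingEnd ℂ) (ρ 1 2) = ρ 2 1 := by
    have := congr_fun (congr_fun hH 2) 1; simpa [Matrix.conjTranspose_apply] using this
  have h20 : (starRingEnd ℂ) (ρ 0 2) = ρ 2 0 := by
    have := congr_fun (congr_fun hH 2) 0; simpa [Matrix.conjTranspose_apply] using this
  have e0 : ρ 0 0 = ((p1 : ℝ) : ℂ) := by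
    have := congr_fun (congr_fun hH 0) 0
    simp [Matrix.conjTranspose_apply] at this
    exact (Complex.conj_eq_iff_re.mp this).symm
  have e1 : ρ 1 1 = ((p2 : ℝ) : ℂ) := by
    have := congr_fun (congr_fun hH 1) 1
    simp [Matrix.conjTranspose_apply] at this
    exact (Complex.conj_eq_iff_re.mp this).symm
  have e2 : ρ 2 2 = ((p3 : ℝ) : ℂ) := by
    have := congr_fun (congr_fun hH 2) 2
    simp [Matrix.conjTranspose_apply] at this
    exact (Complex.conj_eq_iff_re.mp this).symm
  have c01 : ρ 0 1 + (starRingEnd ℂ) (ρ 0 1) = 2 * ((u : ℝ) : ℂ) := by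
    rw [Complex.add_conj]; push_cast; ring
  have c12 : ρ 1 2 + (starRingEnd ℂ) (ρ 1 2) = 2 * ((v : ℝ) : ℂ) := by
    rw [Complex.add_conj]; push_cast; ring
  have c02 : ρ 0 2 + (starRingEnd ℂ) (ρ 0 2) = 2 * ((r : ℝ) : ℂ) := by
    rw [Complex.add_conj]; push_cast; ring
  -- trace one
  have htr : p1 + p2 + p3 = 1 := by
    have h : ρ.trace = ((p1 + p2 + p3 : ℝ) : ℂ) := by
      simp [Matrix.trace, Fin.sum_univ_succ, e0, e1, e2]
      push_cast; ring
    rw [hρtr] at h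
    exact_mod_cast h.symm
  -- auxiliary matrix identities
  have h2c : ((Real.sqrt 2 : ℂ)) * ((Real.sqrt 2 : ℂ)) = 2 := by
    rw [← Complex.ofReal_mul, Real.mul_self_sqrt (by norm_num)]; norm_num
  have hc : ((Real.sqrt 2 : ℂ))⁻¹ * ((Real.sqrt 2 : ℂ))⁻¹ = (2:ℂ)⁻¹ := by
    rw [← mul_inv, h2c]
  have hJz2 : Jz * Jz = !![(1:ℂ),0,0;0,0,0;0,0,1] := by
    ext i j; fin_cases i <;> fin_cases j <;> norm_num [Jz, Matrix.mul_apply, Fin.sum_univ_succ, Matrix.vecHead, Matrix.vecTail]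
  have hJz4 : (Jz * Jz) * (Jz * Jz) = Jz * Jz := by
    rw [hJz2]
    ext i j; fin_cases i <;> fin_cases j <;> norm_num [Matrix.mul_apply, Fin.sum_univ_succ, Matrix.vecHead, Matrix.vecTail]
  have hJx2 : Jx * Jx = (2:ℂ)⁻¹ • !![1,0,1;0,2,0;1,0,1] := by
    rw [Jx, Matrix.smul_mul, Matrix.mul_smul, smul_smul, hc]
    congr 1
    ext i j; fin_cases i <;> fin_cases j <;> norm_num [Matrix.mul_apply, Fin.sum_univ_succ, Matrix.vecHead, Matrix.vecTail]
  have hJx4 : (Jx * Jx) * (Jx * Jx) = Jx * Jx := by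
    rw [hJx2, Matrix.smul_mul, Matrix.mul_smul, smul_smul]
    have hNN : (!![(1:ℂ),0,1;0,2,0;1,0,1] : Matrix (Fin 3) (Fin 3) ℂ) * !![1,0,1;0,2,0;1,0,1] = (2:ℂ) • !![1,0,1;0,2,0;1,0,1] := by
      ext i j; fin_cases i <;> fin_cases j <;> norm_num [Matrix.mul_apply, Fin.sum_univ_succ, Matrix.vecHead, Matrix.vecTail]
    rw [hNN, smul_smul]
    norm_num
  -- traces
  have tz : (ρ * Jz).trace = ((p1 - p3 : ℝ) : ℂ) := by
    simp [Jz, Matrix.trace, Matrix.mul_apply, Fin.sum_univ_succ, e0, e2]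
    (try push_cast); (try ring)
  have tz2 : (ρ * (Jz * Jz)).trace = ((p1 + p3 : ℝ) : ℂ) := by
    rw [hJz2]
    simp [Matrix.trace, Matrix.mul_apply, Fin.sum_univ_succ, e0, e2]
    (try push_cast); (try ring)
  have tx : (ρ * Jx).trace = ((Real.sqrt 2 : ℂ))⁻¹ * ((2*u + 2*v : ℝ) : ℂ) := by
    rw [Jx, Matrix.mul_smul, Matrix.trace_smul, smul_eq_mul]
    congr 1
    simp [Matrix.trace, Matrix.mul_apply, Fin.sum_univ_succ]
    push_cast
    linear_combination c01 + c12 - h10 - h21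
  have tx2 : (ρ * (Jx * Jx)).trace = (((p1 + p3 + 2*p2 + 2*r)/2 : ℝ) : ℂ) := by
    rw [hJx2, Matrix.mul_smul, Matrix.trace_smul, smul_eq_mul]
    have : (ρ * !![(1:ℂ),0,1;0,2,0;1,0,1]).trace = ((p1 + p3 + 2*p2 + 2*r : ℝ) : ℂ) := by
      simp [Matrix.trace, Matrix.mul_apply, Fin.sum_univ_succ, e0, e1, e2]
      push_cast
      linear_combination c02 - h20
    rw [this]
    push_cast
    ring
  -- real forms of the variance hypotheses
  have hVzR : Vz = (p1 + p3) - (p1 - p3)^2 := by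
    rw [tz, tz2] at hVz
    have : (((p1 + p3) - (p1 - p3)^2 : ℝ) : ℂ) = (Vz : ℂ) := by push_cast at hVz ⊢; linear_combination hVz
    exact_mod_cast this.symm
  have hVz2R : Vz2 = (p1 + p3) - (p1 + p3)^2 := by
    rw [hJz4, tz2] at hVz2
    have : (((p1 + p3) - (p1 + p3)^2 : ℝ) : ℂ) = (Vz2 : ℂ) := by push_cast at hVz2 ⊢; linear_combination hVz2
    exact_mod_cast this.symm
  have hVxR : Vx = (p1 + p3 + 2*p2 + 2*r)/2 - 2*(u + v)^2 := by
    rw [tx, tx2] at hVx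
    have hsq : (((Real.sqrt 2 : ℂ))⁻¹ * ((2*u + 2*v : ℝ) : ℂ))^2 = ((2*(u+v)^2 : ℝ) : ℂ) := by
      rw [mul_pow, sq, hc]
      push_cast
      field_simp
    rw [hsq] at hVx
    have : (((p1 + p3 + 2*p2 + 2*r)/2 - 2*(u + v)^2 : ℝ) : ℂ) = (Vx : ℂ) := by push_cast at hVx ⊢; linear_combination hVx
    exact_mod_cast this.symm
  have hVx2R : Vx2 = (p1 + p3 + 2*p2 + 2*r)/2 - ((p1 + p3 + 2*p2 + 2*r)/2)^2 := by
    rw [hJx4, tx2] at hVx2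
    have : (((p1 + p3 + 2*p2 + 2*r)/2 - ((p1 + p3 + 2*p2 + 2*r)/2)^2 : ℝ) : ℂ) = (Vx2 : ℂ) := by
      push_cast at hVx2 ⊢; linear_combination hVx2
    exact_mod_cast this.symm
  -- positivity constraints
  have hq := hρ.dotProduct_mulVec_nonneg
  have hp1 : 0 ≤ p1 := by
    have h := hq ![1, 0, 0]
    have hval : star ![(1:ℂ), 0, 0] ⬝ᵥ ρ.mulVec ![1, 0, 0] = ((p1 : ℝ) : ℂ) := by
      simp [dotProduct, Matrix.mulVec, Fin.sum_univ_succ, e0]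
    rw [hval] at h
    exact Complex.zero_le_real.mp h
  have hp2 : 0 ≤ p2 := by
    have h := hq ![0, 1, 0]
    have hval : star ![(0:ℂ), 1, 0] ⬝ᵥ ρ.mulVec ![0, 1, 0] = ((p2 : ℝ) : ℂ) := by
      simp [dotProduct, Matrix.mulVec, Fin.sum_univ_succ, e1]
    rw [hval] at h
    exact Complex.zero_le_real.mp h
  have hp3 : 0 ≤ p3 := by
    have h := hq ![0, 0, 1]
    have hval : star ![(0:ℂ), 0, 1] ⬝ᵥ ρ.mulVec ![0, 0, 1] = ((p3 : ℝ) : ℂ) := by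
      simp [dotProduct, Matrix.mulVec, Fin.sum_univ_succ, e2]
    rw [hval] at h
    exact Complex.zero_le_real.mp h
  have hquad1 : ∀ t : ℝ, 0 ≤ p2 * (t*t) + (2*(u+v)) * t + (p1 + p3 + 2*r) := by
    intro t
    have h := hq ![1, (t:ℂ), 1]
    have hval : star ![(1:ℂ), (t:ℂ), 1] ⬝ᵥ ρ.mulVec ![1, (t:ℂ), 1]
        = ((p2 * (t*t) + (2*(u+v)) * t + (p1 + p3 + 2*r) : ℝ) : ℂ) := by
      simp [dotProduct, Matrix.mulVec, Fin.sum_univ_succ, Complex.conj_ofReal]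
      rw [e0, e1, e2]
      push_cast
      linear_combination (t:ℂ) * c01 + (t:ℂ) * c12 + c02 - (t:ℂ) * h10 - (t:ℂ) * h21 - h20
    rw [hval] at h
    exact Complex.zero_le_real.mp h
  have hquad2 : ∀ t : ℝ, 0 ≤ p3 * (t*t) + (2*r) * t + p1 := by
    intro t
    have h := hq ![1, 0, (t:ℂ)]
    have hval : star ![(1:ℂ), 0, (t:ℂ)] ⬝ᵥ ρ.mulVec ![1, 0, (t:ℂ)]
        = ((p3 * (t*t) + (2*r) * t + p1 : ℝ) : ℂ) := by
      simp [dotProduct, Matrix.mulVec, Fin.sum_univ_succ, Complex.conj_ofReal]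
      rw [e0, e2]
      push_cast
      linear_combination (t:ℂ) * c02 - (t:ℂ) * h20
    rw [hval] at h
    exact Complex.zero_le_real.mp h
  have hd1 : (2*(u+v))^2 - 4 * p2 * (p1 + p3 + 2*r) ≤ 0 := by
    have := discrim_le_zero hquad1
    simpa [discrim] using this
  have hd2 : (2*r)^2 - 4 * p3 * p1 ≤ 0 := by
    have := discrim_le_zero hquad2
    simpa [discrim] using this
  -- assemble
  have hb0 : 0 ≤ p1 + p3 := by linarith
  have hb1 : p1 + p3 ≤ 1 := by linarith
  have h1 : (p1 - p3)^2 + 4*r^2 ≤ (p1 + p3)^2 := by nlinarith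
  have h2 : (u + v)^2 ≤ (1 - (p1 + p3))*((p1 + p3) + 2*r) := by
    have hp2' : p2 = 1 - (p1 + p3) := by linarith
    rw [hp2'] at hd1
    nlinarith [hd1]
  have hmaster := master (p1 + p3) (p1 - p3) r (u + v) hb0 hb1 h1 h2
  have hδ : (p1 + p3 + 2*p2 + 2*r)/2 = 1 - (p1 + p3)/2 + r := by linarith
  have heq : (2 - Vx - 3 * Vx2) * (2 - Vz - 3 * Vz2)
      = (2 - 4*(1-(p1+p3)/2+r) + 3*(1-(p1+p3)/2+r)^2 + 2*(u+v)^2) * (2 - 4*(p1+p3) + 3*(p1+p3)^2 + (p1-p3)^2) := by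
    rw [hVxR, hVx2R, hVzR, hVz2R, hδ]
    ring
  rw [heq]
  have hs2 : Real.sqrt 2 ^ 2 = 2 := Real.sq_sqrt (by norm_num)
  have hspos : 0 < Real.sqrt 2 := Real.sqrt_pos.mpr (by norm_num)
  have hinv : 1 / Real.sqrt 2 ≤ 29/40 := by
    rw [div_le_iff₀ hspos]
    nlinarith [hs2, hspos]
  linarith [hmaster, hinv]
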